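/- The assignment R_i ↦ R'_i R_0 and R'_i ↦ R_0^{−1} R_i (i = 0,…,n−1) extends to a group automorphism ω of the presented group B; moreover ω² is the inner automorphism x ↦ R_0^{−1} x R_0, i.e. ω(ω(x)) = R_0^{−1} x R_0 for every x ∈ B. -/

import Mathlib

/-- `altProd a b k` is the alternating product `a * b * a * b * ⋯` with `k` factors. -/
def altProd {M : Type*} [Monoid M] (a b : M) : ℕ → M
  | 0 => 1
  | k + 1 => a * altProd b a k

section Bourbaki
variable {n : ℕ}

/-- The defining relations of the presented group `B`, with generators
`R_i = Sum.inl i` and `R'_i = Sum.inr i`:  `R'_0 = 1`;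
`⟨R'_i,R_j⟩_{m_{ij}} = ⟨R'_j,R_i⟩_{m_{ij}}` and `⟨R_i,R'_j⟩_{m_{ij}} = ⟨R_j,R'_i⟩_{m_{ij}}`
for `i < j` with `m_{ij}` finite (entry `0` encodes `∞`, the relation being omitted). -/
def bourbakiRels (M : CoxeterMatrix (Fin n)) (hn : 0 < n) :
    Set (FreeGroup (Fin n ⊕ Fin n)) :=
  { x | x = FreeGroup.of (Sum.inr (⟨0, hn⟩ : Fin n)) ∨
      (∃ i j : Fin n, i < j ∧ M i j ≠ 0 ∧
        x = altProd (FreeGroup.of (Sum.inr i)) (FreeGroup.of (Sum.inl j)) (M i j) *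
          (altProd (FreeGroup.of (Sum.inr j)) (FreeGroup.of (Sum.inl i)) (M i j))⁻¹) ∨
      (∃ i j : Fin n, i < j ∧ M i j ≠ 0 ∧
        x = altProd (FreeGroup.of (Sum.inl i)) (FreeGroup.of (Sum.inr j)) (M i j) *
          (altProd (FreeGroup.of (Sum.inl j)) (FreeGroup.of (Sum.inr i)) (M i j))⁻¹) }

end Bourbaki

lemma altProd_map {M N : Type*} [Monoid M] [Monoid N] (f : M →* N) :
    ∀ (k : ℕ) (a b : M), f (altProd a b k) = altProd (f a) (f b) k
  | 0, a, b => by simp [altProd]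
  | k + 1, a, b => by simp [altProd, altProd_map f k]

lemma altProd_conj {G : Type*} [Group G] :
    ∀ (k : ℕ) (a b t : G),
      altProd (t⁻¹ * a) (b * t) k = t⁻¹ * altProd a b k * (if Even k then t else 1) ∧
      altProd (a * t) (t⁻¹ * b) k = altProd a b k * (if Even k then 1 else t)
  | 0, a, b, t => by simp [altProd]
  | k + 1, a, b, t => by
    obtain ⟨h1, h2⟩ := altProd_conj k b a t
    constructor
    · rw [altProd, h2, altProd]
      rcases Nat.even_or_odd k with h | h
      · simp [h, Nat.even_add_one, mul_assoc]
      · simp [Nat.not_even_iff_odd.mpr h, Nat.even_add_one, mul_assoc]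
    · rw [altProd, h1, altProd]
      rcases Nat.even_or_odd k with h | h
      · simp [h, Nat.even_add_one, mul_assoc]
      · simp [Nat.not_even_iff_odd.mpr h, Nat.even_add_one, mul_assoc]

lemma mk_rel_eq_one {α : Type*} {rels : Set (FreeGroup α)} {r : FreeGroup α} (hr : r ∈ rels) :
    PresentedGroup.mk rels r = 1 :=
  (QuotientGroup.eq_one_iff _).2 (Subgroup.subset_normalClosure hr)

/-- The assignment `R_i ↦ R'_i R_0`, `R'_i ↦ R_0⁻¹ R_i` extends to a group automorphism `ω`
of the presented group `B`, and `ω²` is the inner automorphism `x ↦ R_0⁻¹ x R_0`. -/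
theorem omega_automorphism_of_bourbaki_presentation
    (n : ℕ) (hn : 0 < n) (M : CoxeterMatrix (Fin n)) :
    ∃ ω : PresentedGroup (bourbakiRels M hn) ≃* PresentedGroup (bourbakiRels M hn),
      (∀ i : Fin n, ω (PresentedGroup.of (Sum.inl i)) =
        PresentedGroup.of (Sum.inr i) * PresentedGroup.of (Sum.inl (⟨0, hn⟩ : Fin n))) ∧
      (∀ i : Fin n, ω (PresentedGroup.of (Sum.inr i)) =
        (PresentedGroup.of (Sum.inl (⟨0, hn⟩ : Fin n)))⁻¹ * PresentedGroup.of (Sum.inl i)) ∧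
      (∀ x : PresentedGroup (bourbakiRels M hn),
        ω (ω x) = (PresentedGroup.of (Sum.inl (⟨0, hn⟩ : Fin n)))⁻¹ * x *
          PresentedGroup.of (Sum.inl (⟨0, hn⟩ : Fin n))) := by
  set B := PresentedGroup (bourbakiRels M hn)
  set t : B := PresentedGroup.of (Sum.inl (⟨0, hn⟩ : Fin n)) with ht
  -- image-of-generators map
  set g : Fin n ⊕ Fin n → B :=
    Sum.elim (fun i => PresentedGroup.of (Sum.inr i) * t)
      (fun i => t⁻¹ * PresentedGroup.of (Sum.inl i)) with hg
  -- the relations hold in B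
  have hrel : ∀ i j : Fin n, ∀ m : ℕ, (i < j ∧ M i j ≠ 0 ∧ m = M i j) →
      (altProd (PresentedGroup.of (Sum.inr i)) (PresentedGroup.of (Sum.inl j)) m
        = (altProd (PresentedGroup.of (Sum.inr j)) (PresentedGroup.of (Sum.inl i)) m : B)) ∧
      (altProd (PresentedGroup.of (Sum.inl i)) (PresentedGroup.of (Sum.inr j)) m
        = (altProd (PresentedGroup.of (Sum.inl j)) (PresentedGroup.of (Sum.inr i)) m : B)) := by
    rintro i j m ⟨hij, hM, rfl⟩
    constructor
    · have := mk_rel_eq_one (rels := bourbakiRels M hn)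
        (Or.inr (Or.inl ⟨i, j, hij, hM, rfl⟩))
      rw [map_mul, map_inv, mul_inv_eq_one] at this
      simp only [altProd_map] at this; exact this
    · have := mk_rel_eq_one (rels := bourbakiRels M hn)
        (Or.inr (Or.inr ⟨i, j, hij, hM, rfl⟩))
      rw [map_mul, map_inv, mul_inv_eq_one] at this
      simp only [altProd_map] at this; exact this
  have hr0 : (PresentedGroup.of (Sum.inr (⟨0, hn⟩ : Fin n)) : B) = 1 :=
    mk_rel_eq_one (Or.inl rfl)
  have hlift : ∀ r ∈ bourbakiRels M hn, FreeGroup.lift g r = 1 := by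
    rintro r (rfl | ⟨i, j, hij, hM, rfl⟩ | ⟨i, j, hij, hM, rfl⟩)
    · simp [hg, ht]
    · rw [map_mul, map_inv, mul_inv_eq_one, altProd_map, altProd_map]
      simp only [FreeGroup.lift_apply_of, hg, Sum.elim_inl, Sum.elim_inr]
      rw [(altProd_conj _ _ _ _).1, (altProd_conj _ _ _ _).1,
        (hrel i j (M i j) ⟨hij, hM, rfl⟩).2]
    · rw [map_mul, map_inv, mul_inv_eq_one, altProd_map, altProd_map]
      simp only [FreeGroup.lift_apply_of, hg, Sum.elim_inl, Sum.elim_inr]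
      rw [(altProd_conj _ _ _ _).2, (altProd_conj _ _ _ _).2,
        (hrel i j (M i j) ⟨hij, hM, rfl⟩).1]
  set f : B →* B := PresentedGroup.toGroup hlift with hf
  have hfl : ∀ i : Fin n, f (PresentedGroup.of (Sum.inl i))
      = PresentedGroup.of (Sum.inr i) * t := fun i => PresentedGroup.toGroup.of hlift
  have hfr : ∀ i : Fin n, f (PresentedGroup.of (Sum.inr i))
      = t⁻¹ * PresentedGroup.of (Sum.inl i) := fun i => PresentedGroup.toGroup.of hlift
  have hft : f t = t := by rw [ht, hfl, hr0, one_mul]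
  -- f ∘ f = conjugation by t⁻¹
  have hc : ∀ x : B, f (f x) = t⁻¹ * x * t := by
    have : f.comp f = ((MulAut.conj t⁻¹).toMonoidHom : B →* B) := by
      apply PresentedGroup.ext
      rintro (i | i) <;>
        simp [hfl, hfr, hft, hr0, MulAut.conj, mul_assoc] <;> exact (inv_inv t).symm
    intro x
    have := congrFun (congrArg DFunLike.coe this) x
    simp [MulAut.conj] at this; exact this.trans (congrArg _ (inv_inv t))
  have hff : ∀ x : B, f (t * x * t⁻¹) = f t * f x * (f t)⁻¹ := by
    intro x; simp
  refine ⟨{ toFun := f, invFun := fun x => t * f x * t⁻¹,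
            left_inv := ?_, right_inv := ?_, map_mul' := map_mul f }, ?_, ?_, ?_⟩
  · intro x; show t * f (f x) * t⁻¹ = x; rw [hc x]; group
  · intro x; show f (t * f x * t⁻¹) = x
    rw [map_mul, map_mul, hft, map_inv, hft, hc x]; group
  · exact hfl
  · exact hfr
  · exact hc
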